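/- Let θ₁, θ₂, θ̂_μ ∈ F satisfy ∇R₁(θ₁) = 0, ∇R₂(θ₂) = 0, and R_μ(θ) ≤ R_μ(θ̂_μ) for all θ. Suppose R_adv is L_adv-smooth and m_adv-strongly concave and R_real is L_real-smooth and m_real-strongly concave, with m_adv, m_real > 0. Set L₁ = β·L_adv + (1−β)·L_real, L₂ = (1−β)·L_adv + β·L_real and m_μ = μ·m_adv + (1−μ)·m_real. Then for every λ ∈ [0,1], R_μ(θ̂_μ) − R_μ(θ(λ)) ≤ ( |c₁|·L₁·(1−λ) + |c₂|·L₂·λ )² · ‖θ₂ − θ₁‖² / (2·m_μ). -/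

import Mathlib

open scoped RealInnerProductSpace

lemma gradient_combo {F : Type*} [NormedAddCommGroup F] [InnerProductSpace ℝ F]
    [CompleteSpace F] (a b : ℝ) (f g : F → ℝ) (x : F)
    (hf : DifferentiableAt ℝ f x) (hg : DifferentiableAt ℝ g x) :
    gradient (fun y => a * f y + b * g y) x = a • gradient f x + b • gradient g x := by
  have hf' := hf.hasGradientAt
  have hg' := hg.hasGradientAt
  have : HasGradientAt (fun y => a * f y + b * g y)
      (a • gradient f x + b • gradient g x) x := by
    rw [hasGradientAt_iff_hasFDerivAt] at *
    have := (hf'.const_mul a).add (hg'.const_mul b)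
    simp [map_add, map_smul] at this ⊢
    exact this
  exact this.gradient

set_option maxHeartbeats 1000000 in
/-- Pointwise suboptimality bound along the interpolation path: if `∇R₁(θ₁) = 0`,
`∇R₂(θ₂) = 0`, and `θ̂_μ` globally maximizes `R_μ`, with `R_adv` being `L_adv`-smooth and
`m_adv`-strongly concave and `R_real` being `L_real`-smooth and `m_real`-strongly concave,
then for every `λ ∈ [0,1]`,
`R_μ(θ̂_μ) − R_μ(θ(λ)) ≤ (|c₁|·L₁·(1−λ) + |c₂|·L₂·λ)² · ‖θ₂ − θ₁‖² / (2m_μ)`. -/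
theorem pointwise_suboptimality_along_interpolation
    {F : Type*} [NormedAddCommGroup F] [InnerProductSpace ℝ F] [CompleteSpace F]
    (R_adv R_real : F → ℝ)
    (hadv : Differentiable ℝ R_adv) (hreal : Differentiable ℝ R_real)
    (β μ : ℝ) (hβ : β ∈ Set.Ioc (1 / 2 : ℝ) 1) (hμ : μ ∈ Set.Icc (0 : ℝ) 1)
    (L_adv L_real m_adv m_real : ℝ) (hm_adv : 0 < m_adv) (hm_real : 0 < m_real)
    (hL_adv : ∀ a b : F, ‖gradient R_adv a - gradient R_adv b‖ ≤ L_adv * ‖a - b‖)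
    (hL_real : ∀ a b : F, ‖gradient R_real a - gradient R_real b‖ ≤ L_real * ‖a - b‖)
    (hSC_adv : ∀ a b : F,
      R_adv a ≤ R_adv b + ⟪gradient R_adv b, a - b⟫ - (m_adv / 2) * ‖a - b‖ ^ 2)
    (hSC_real : ∀ a b : F,
      R_real a ≤ R_real b + ⟪gradient R_real b, a - b⟫ - (m_real / 2) * ‖a - b‖ ^ 2)
    (R₁ R₂ Rμ : F → ℝ)
    (hR₁ : R₁ = fun θ => β * R_adv θ + (1 - β) * R_real θ)
    (hR₂ : R₂ = fun θ => (1 - β) * R_adv θ + β * R_real θ)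
    (hRμ : Rμ = fun θ => μ * R_adv θ + (1 - μ) * R_real θ)
    (θ₁ θ₂ θhat : F)
    (hθ₁ : gradient R₁ θ₁ = 0)
    (hθ₂ : gradient R₂ θ₂ = 0)
    (hθhat : ∀ θ : F, Rμ θ ≤ Rμ θhat)
    (c₁ c₂ L₁ L₂ mμ : ℝ)
    (hc₁ : c₁ = (μ + β - 1) / (2 * β - 1)) (hc₂ : c₂ = (β - μ) / (2 * β - 1))
    (hL₁ : L₁ = β * L_adv + (1 - β) * L_real) (hL₂ : L₂ = (1 - β) * L_adv + β * L_real)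
    (hmμ : mμ = μ * m_adv + (1 - μ) * m_real)
    (l : ℝ) (hl : l ∈ Set.Icc (0 : ℝ) 1) :
    Rμ θhat - Rμ ((1 - l) • θ₂ + l • θ₁) ≤
      (|c₁| * L₁ * (1 - l) + |c₂| * L₂ * l) ^ 2 * ‖θ₂ - θ₁‖ ^ 2 / (2 * mμ) := by
  obtain ⟨hβ1, hβ2⟩ := hβ
  obtain ⟨hμ0, hμ1⟩ := hμ
  obtain ⟨hl0, hl1⟩ := hl
  have h2β : (2 * β - 1) ≠ 0 := by linarith
  set x := (1 - l) • θ₂ + l • θ₁ with hx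
  set ga := gradient R_adv with hga
  set gr := gradient R_real with hgr
  -- gradients of combinations
  have hgRμ : ∀ y : F, gradient Rμ y = μ • ga y + (1 - μ) • gr y := by
    intro y; rw [hRμ]; exact gradient_combo μ (1 - μ) R_adv R_real y (hadv y) (hreal y)
  have hgR₁ : ∀ y : F, gradient R₁ y = β • ga y + (1 - β) • gr y := by
    intro y; rw [hR₁]; exact gradient_combo β (1 - β) R_adv R_real y (hadv y) (hreal y)
  have hgR₂ : ∀ y : F, gradient R₂ y = (1 - β) • ga y + β • gr y := by
    intro y; rw [hR₂]; exact gradient_combo (1 - β) β R_adv R_real y (hadv y) (hreal y)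
  -- grad Rμ x as combination of grad R₁ x and grad R₂ x
  have hcombo : gradient Rμ x = c₁ • gradient R₁ x + c₂ • gradient R₂ x := by
    rw [hgRμ x, hgR₁ x, hgR₂ x]
    have hinv : (2 * β - 1) * (2 * β - 1)⁻¹ = 1 := mul_inv_cancel₀ h2β
    match_scalars
    · rw [hc₁, hc₂, div_eq_mul_inv, div_eq_mul_inv]; linear_combination (-μ) * hinv
    · rw [hc₁, hc₂, div_eq_mul_inv, div_eq_mul_inv]; linear_combination (-(1 - μ)) * hinv
  -- distances
  have hx1 : x - θ₁ = (1 - l) • (θ₂ - θ₁) := by rw [hx]; module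
  have hx2 : x - θ₂ = l • (θ₁ - θ₂) := by rw [hx]; module
  have hnx1 : ‖x - θ₁‖ = (1 - l) * ‖θ₂ - θ₁‖ := by
    rw [hx1, norm_smul, Real.norm_eq_abs, abs_of_nonneg (by linarith)]
  have hnx2 : ‖x - θ₂‖ = l * ‖θ₂ - θ₁‖ := by
    rw [hx2, norm_smul, Real.norm_eq_abs, abs_of_nonneg hl0, norm_sub_rev]
  -- gradient bounds
  have hG₁ : ‖gradient R₁ x‖ ≤ L₁ * ((1 - l) * ‖θ₂ - θ₁‖) := by
    have hd : gradient R₁ x = β • (ga x - ga θ₁) + (1 - β) • (gr x - gr θ₁) := by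
      have h0 : β • ga θ₁ + (1 - β) • gr θ₁ = 0 := (hgR₁ θ₁).symm.trans hθ₁
      rw [hgR₁ x]
      have he : β • (ga x - ga θ₁) + (1 - β) • (gr x - gr θ₁)
          = β • ga x + (1 - β) • gr x - (β • ga θ₁ + (1 - β) • gr θ₁) := by module
      rw [he, h0, sub_zero]
    rw [hd, hL₁, ← hnx1]
    calc ‖β • (ga x - ga θ₁) + (1 - β) • (gr x - gr θ₁)‖
        ≤ ‖β • (ga x - ga θ₁)‖ + ‖(1 - β) • (gr x - gr θ₁)‖ := norm_add_le _ _
      _ = β * ‖ga x - ga θ₁‖ + (1 - β) * ‖gr x - gr θ₁‖ := by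
          rw [norm_smul, norm_smul, Real.norm_eq_abs, Real.norm_eq_abs,
            abs_of_nonneg (by linarith), abs_of_nonneg (by linarith)]
      _ ≤ β * (L_adv * ‖x - θ₁‖) + (1 - β) * (L_real * ‖x - θ₁‖) := by
          gcongr <;> first
            | exact hL_adv x θ₁ | exact hL_real x θ₁ | linarith
      _ = (β * L_adv + (1 - β) * L_real) * ‖x - θ₁‖ := by ring
  have hG₂ : ‖gradient R₂ x‖ ≤ L₂ * (l * ‖θ₂ - θ₁‖) := by
    have hd : gradient R₂ x = (1 - β) • (ga x - ga θ₂) + β • (gr x - gr θ₂) := by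
      have h0 : (1 - β) • ga θ₂ + β • gr θ₂ = 0 := (hgR₂ θ₂).symm.trans hθ₂
      rw [hgR₂ x]
      have he : (1 - β) • (ga x - ga θ₂) + β • (gr x - gr θ₂)
          = (1 - β) • ga x + β • gr x - ((1 - β) • ga θ₂ + β • gr θ₂) := by module
      rw [he, h0, sub_zero]
    rw [hd, hL₂, ← hnx2]
    calc ‖(1 - β) • (ga x - ga θ₂) + β • (gr x - gr θ₂)‖
        ≤ ‖(1 - β) • (ga x - ga θ₂)‖ + ‖β • (gr x - gr θ₂)‖ := norm_add_le _ _
      _ = (1 - β) * ‖ga x - ga θ₂‖ + β * ‖gr x - gr θ₂‖ := by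
          rw [norm_smul, norm_smul, Real.norm_eq_abs, Real.norm_eq_abs,
            abs_of_nonneg (by linarith), abs_of_nonneg (by linarith)]
      _ ≤ (1 - β) * (L_adv * ‖x - θ₂‖) + β * (L_real * ‖x - θ₂‖) := by
          gcongr <;> first
            | exact hL_adv x θ₂ | exact hL_real x θ₂ | linarith
      _ = ((1 - β) * L_adv + β * L_real) * ‖x - θ₂‖ := by ring
  -- norm of gradient of Rμ at x
  have hgbound : ‖gradient Rμ x‖ ≤ (|c₁| * L₁ * (1 - l) + |c₂| * L₂ * l) * ‖θ₂ - θ₁‖ := by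
    rw [hcombo]
    calc ‖c₁ • gradient R₁ x + c₂ • gradient R₂ x‖
        ≤ ‖c₁ • gradient R₁ x‖ + ‖c₂ • gradient R₂ x‖ := norm_add_le _ _
      _ = |c₁| * ‖gradient R₁ x‖ + |c₂| * ‖gradient R₂ x‖ := by
          rw [norm_smul, norm_smul, Real.norm_eq_abs, Real.norm_eq_abs]
      _ ≤ |c₁| * (L₁ * ((1 - l) * ‖θ₂ - θ₁‖)) + |c₂| * (L₂ * (l * ‖θ₂ - θ₁‖)) := by
          gcongr <;> first | exact abs_nonneg _ | exact hG₁ | exact hG₂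
      _ = (|c₁| * L₁ * (1 - l) + |c₂| * L₂ * l) * ‖θ₂ - θ₁‖ := by ring
  -- positivity of mμ
  have hmμpos : 0 < mμ := by
    rw [hmμ]
    nlinarith [lt_min hm_adv hm_real, min_le_left m_adv m_real, min_le_right m_adv m_real,
      mul_nonneg hμ0 (sub_nonneg.2 (min_le_left m_adv m_real)),
      mul_nonneg (by linarith : (0:ℝ) ≤ 1 - μ) (sub_nonneg.2 (min_le_right m_adv m_real))]
  -- strong concavity of Rμ
  have hSCμ : Rμ θhat ≤ Rμ x + ⟪gradient Rμ x, θhat - x⟫ - (mμ / 2) * ‖θhat - x‖ ^ 2 := by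
    have h1 := hSC_adv θhat x
    have h2 := hSC_real θhat x
    have hinner : ⟪gradient Rμ x, θhat - x⟫
        = μ * ⟪ga x, θhat - x⟫ + (1 - μ) * ⟪gr x, θhat - x⟫ := by
      rw [hgRμ x, inner_add_left, real_inner_smul_left, real_inner_smul_left]
    rw [hinner, hmμ]
    simp only [hRμ]
    nlinarith [mul_le_mul_of_nonneg_left h1 hμ0,
      mul_le_mul_of_nonneg_left h2 (by linarith : (0:ℝ) ≤ 1 - μ)]
  -- conclude
  have hip : ⟪gradient Rμ x, θhat - x⟫ ≤ ‖gradient Rμ x‖ * ‖θhat - x‖ :=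
    real_inner_le_norm _ _
  have key : Rμ θhat - Rμ x ≤ ‖gradient Rμ x‖ ^ 2 / (2 * mμ) := by
    have step : Rμ θhat - Rμ x
        ≤ ‖gradient Rμ x‖ * ‖θhat - x‖ - mμ / 2 * ‖θhat - x‖ ^ 2 := by linarith
    refine step.trans ?_
    rw [le_div_iff₀ (by positivity : (0:ℝ) < 2 * mμ)]
    nlinarith [sq_nonneg (‖gradient Rμ x‖ - mμ * ‖θhat - x‖)]
  have hsq : ‖gradient Rμ x‖ ^ 2
      ≤ ((|c₁| * L₁ * (1 - l) + |c₂| * L₂ * l) * ‖θ₂ - θ₁‖) ^ 2 := by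
    have h0 : (0:ℝ) ≤ ‖gradient Rμ x‖ := norm_nonneg _
    nlinarith
  calc Rμ θhat - Rμ x ≤ ‖gradient Rμ x‖ ^ 2 / (2 * mμ) := key
    _ ≤ ((|c₁| * L₁ * (1 - l) + |c₂| * L₂ * l) * ‖θ₂ - θ₁‖) ^ 2 / (2 * mμ) := by gcongr
    _ = (|c₁| * L₁ * (1 - l) + |c₂| * L₂ * l) ^ 2 * ‖θ₂ - θ₁‖ ^ 2 / (2 * mμ) := by ring
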